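/- Let δ, μ₁, μ₂, β > 0, N ≥ 5, p = N/(N-2) (so 1 < p < 2), and (w₁, w₂) a positive C² solution on ℝ of w₁'' - δ²w₁ + μ₁w₁^{2p-1} + βw₁^{p-1}w₂^p = 0, w₂'' - δ²w₂ + μ₂w₂^{2p-1} + βw₂^{p-1}w₁^p = 0 with constant energy Ψ ≡ K ≥ 0 such that f₁, f₂ > 0 on ℝ (where fᵢ(t) = -½wᵢ'² + (δ²/2)wᵢ² - (μᵢ/(2p))wᵢ^{2p}). If t₀ is a local minimum point of w₁, then w₁(t₀) < (δ²/μ₁)^{1/(2p-2)} and f₂(t₀) < ((N-4)/N)·f₁(t₀). -/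

import Mathlib

open Filter Set Topology

lemma second_deriv_nonneg_of_isLocalMin (f : ℝ → ℝ) (hf : ContDiff ℝ 2 f) (t₀ : ℝ)
    (hmin : IsLocalMin f t₀) : 0 ≤ deriv (deriv f) t₀ := by
  by_contra h
  push_neg at h
  have hf' : ContDiff ℝ 1 (deriv f) := by
    rw [show (2 : WithTop ℕ∞) = 1 + 1 from rfl] at hf
    exact (contDiff_succ_iff_deriv.mp hf).2.2
  have hg0 : deriv f t₀ = 0 := hmin.deriv_eq_zero
  have hd : HasDerivAt (deriv f) (deriv (deriv f) t₀) t₀ :=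
    ((hf'.differentiable one_ne_zero) t₀).hasDerivAt
  rw [hasDerivAt_iff_tendsto_slope] at hd
  have hev : ∀ᶠ t in 𝓝[≠] t₀, slope (deriv f) t₀ t < 0 := hd.eventually_lt_const h
  have hev' : ∀ᶠ t in 𝓝[>] t₀, deriv f t < 0 := by
    have hmono : 𝓝[>] t₀ ≤ 𝓝[≠] t₀ := nhdsWithin_mono _ (fun x hx => ne_of_gt hx)
    filter_upwards [hev.filter_mono hmono, self_mem_nhdsWithin] with t ht ht'
    have hslope : slope (deriv f) t₀ t = deriv f t / (t - t₀) := by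
      rw [slope_def_field, hg0, sub_zero]
    rw [hslope] at ht
    have htt : (0:ℝ) < t - t₀ := sub_pos.mpr ht'
    have : deriv f t = deriv f t / (t - t₀) * (t - t₀) := (div_mul_cancel₀ _ htt.ne').symm
    rw [this]
    exact mul_neg_of_neg_of_pos ht htt
  obtain ⟨b, hb, hball⟩ := (nhdsGT_basis t₀).eventually_iff.mp hev'
  have hanti : StrictAntiOn f (Icc t₀ b) := by
    apply strictAntiOn_of_deriv_neg (convex_Icc _ _) (hf.continuous.continuousOn)
    intro x hx
    rw [interior_Icc] at hx
    exact hball hx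
  have hmem : ∀ᶠ t in 𝓝[>] t₀, t ∈ Ioo t₀ b :=
    (nhdsGT_basis t₀).eventually_iff.mpr ⟨b, hb, fun t ht => ht⟩
  obtain ⟨t, h1, h2⟩ := ((hmin.filter_mono nhdsWithin_le_nhds).and hmem).exists
  have := hanti (left_mem_Icc.mpr hb.le) (Ioo_subset_Icc_self h2) h2.1
  linarith

theorem stmt_8 (N : ℕ) (hN : 5 ≤ N) (δ μ₁ μ₂ β p K : ℝ)
    (hδ : 0 < δ) (hμ₁ : 0 < μ₁) (hμ₂ : 0 < μ₂) (hβ : 0 < β)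
    (hp : p = (N : ℝ) / ((N : ℝ) - 2)) (hK : 0 ≤ K) (w₁ w₂ : ℝ → ℝ)
    (hw₁ : ContDiff ℝ 2 w₁) (hw₂ : ContDiff ℝ 2 w₂)
    (hpos₁ : ∀ t, 0 < w₁ t) (hpos₂ : ∀ t, 0 < w₂ t)
    (heq₁ : ∀ t, deriv (deriv w₁) t - δ^2 * w₁ t + μ₁ * w₁ t ^ (2*p - 1)
      + β * w₁ t ^ (p - 1) * w₂ t ^ p = 0)
    (heq₂ : ∀ t, deriv (deriv w₂) t - δ^2 * w₂ t + μ₂ * w₂ t ^ (2*p - 1)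
      + β * w₂ t ^ (p - 1) * w₁ t ^ p = 0)
    (hΨ : ∀ t, (1/2) * ((deriv w₁ t)^2 + (deriv w₂ t)^2 - δ^2 * (w₁ t)^2 - δ^2 * (w₂ t)^2)
      + (1/(2*p)) * (μ₁ * w₁ t ^ (2*p) + 2*β * w₁ t ^ p * w₂ t ^ p + μ₂ * w₂ t ^ (2*p)) = K)
    (hf₁ : ∀ t, 0 < -(1/2) * (deriv w₁ t)^2 + (δ^2/2) * (w₁ t)^2 - (μ₁/(2*p)) * w₁ t ^ (2*p))
    (hf₂ : ∀ t, 0 < -(1/2) * (deriv w₂ t)^2 + (δ^2/2) * (w₂ t)^2 - (μ₂/(2*p)) * w₂ t ^ (2*p))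
    (t₀ : ℝ) (hmin : IsLocalMin w₁ t₀) :
    w₁ t₀ < (δ^2 / μ₁) ^ (1/(2*p - 2)) ∧
    (-(1/2) * (deriv w₂ t₀)^2 + (δ^2/2) * (w₂ t₀)^2 - (μ₂/(2*p)) * w₂ t₀ ^ (2*p))
      < (((N : ℝ) - 4) / (N : ℝ)) *
        (-(1/2) * (deriv w₁ t₀)^2 + (δ^2/2) * (w₁ t₀)^2 - (μ₁/(2*p)) * w₁ t₀ ^ (2*p)) := by
  have hN5 : (5:ℝ) ≤ (N:ℝ) := by exact_mod_cast hN
  have hden : (0:ℝ) < (N:ℝ) - 2 := by linarith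
  have hp1 : 1 < p := by
    rw [hp, lt_div_iff₀ hden]; linarith
  have hp0 : 0 < p := by linarith
  have ha : 0 < w₁ t₀ := hpos₁ t₀
  have hbpos : 0 < w₂ t₀ := hpos₂ t₀
  have hd2 : 0 ≤ deriv (deriv w₁) t₀ := second_deriv_nonneg_of_isLocalMin w₁ hw₁ t₀ hmin
  have e1 := heq₁ t₀
  have key : μ₁ * w₁ t₀ ^ (2*p - 1) + β * w₁ t₀ ^ (p - 1) * w₂ t₀ ^ p ≤ δ^2 * w₁ t₀ := by
    linarith
  have hβpos : 0 < β * w₁ t₀ ^ (p - 1) * w₂ t₀ ^ p := by positivity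
  -- rpow identities
  have e21 : w₁ t₀ ^ (2*p - 1) = w₁ t₀ ^ (2*p - 2) * w₁ t₀ := by
    rw [← Real.rpow_add_one ha.ne' (2*p - 2)]; ring_nf
  have e2p : w₁ t₀ ^ (2*p) = w₁ t₀ ^ (2*p - 1) * w₁ t₀ := by
    rw [← Real.rpow_add_one ha.ne' (2*p - 1)]; ring_nf
  have ep : w₁ t₀ ^ p = w₁ t₀ ^ (p - 1) * w₁ t₀ := by
    rw [← Real.rpow_add_one ha.ne' (p - 1)]; ring_nf
  -- Part 1
  have part1 : w₁ t₀ < (δ^2 / μ₁) ^ (1/(2*p - 2)) := by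
    have h3 : μ₁ * w₁ t₀ ^ (2*p - 2) * w₁ t₀ < δ^2 * w₁ t₀ := by
      rw [e21] at key; nlinarith
    have h4 : μ₁ * w₁ t₀ ^ (2*p - 2) < δ^2 := lt_of_mul_lt_mul_right h3 ha.le
    have h5 : w₁ t₀ ^ (2*p - 2) < δ^2 / μ₁ := (lt_div_iff₀ hμ₁).mpr (by linarith)
    have hexp : 0 < 2*p - 2 := by linarith
    have h6 := Real.rpow_lt_rpow (Real.rpow_nonneg ha.le _) h5 (by positivity : 0 < 1/(2*p-2))
    rwa [← Real.rpow_mul ha.le, mul_one_div, div_self hexp.ne', Real.rpow_one] at h6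
  refine ⟨part1, ?_⟩
  -- Part 2
  have d1 : deriv w₁ t₀ = 0 := hmin.deriv_eq_zero
  have hmul : μ₁ * w₁ t₀ ^ (2*p) + β * w₁ t₀ ^ p * w₂ t₀ ^ p ≤ δ^2 * (w₁ t₀)^2 := by
    rw [e2p, ep]
    nlinarith [mul_le_mul_of_nonneg_right key ha.le]
  have e2 := hΨ t₀
  rw [d1] at e2
  have hc : ((N:ℝ) - 4) / (N:ℝ) = 2 * p⁻¹ - 1 := by
    rw [hp]
    field_simp
    ring
  rw [hc, d1]
  have hpinv0 : 0 < p⁻¹ := by positivity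
  have hpinv1 : p⁻¹ < 1 := by
    rw [inv_lt_one_iff₀]; right; exact hp1
  have hA2p : 0 < w₁ t₀ ^ (2*p) := Real.rpow_pos_of_pos ha _
  have h1 : 0 < p⁻¹ * (μ₁ * w₁ t₀ ^ (2*p)) * (1 - p⁻¹) :=
    mul_pos (mul_pos hpinv0 (mul_pos hμ₁ hA2p)) (by linarith)
  have h2 : p⁻¹ * (μ₁ * w₁ t₀ ^ (2*p) + β * w₁ t₀ ^ p * w₂ t₀ ^ p) ≤ p⁻¹ * (δ^2 * (w₁ t₀)^2) :=
    mul_le_mul_of_nonneg_left hmul hpinv0.le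
  have hinv2 : (1:ℝ)/(2*p) = (1/2) * p⁻¹ := by field_simp
  rw [hinv2] at e2
  have hd1 : μ₁/(2*p) = (1/2) * p⁻¹ * μ₁ := by field_simp
  have hd2' : μ₂/(2*p) = (1/2) * p⁻¹ * μ₂ := by field_simp
  rw [hd1, hd2']
  linarith [e2, h1, h2, hK]
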